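/- Let A be a real n×n matrix, let λ ≥ 0 and ε > 0, let 1 ≤ p ≤ n, and let P be a real symmetric n×n matrix with inertia p such that AᵀP + PA ⪯ −2λP − εI. Let μ_min(P) < 0 denote the smallest eigenvalue of P and set ε₁ = ε/|μ_min(P)|. Then for every t ≥ 0 and every x ∈ ℝⁿ with xᵀPx ≤ 0, one has (exp(At)x)ᵀP(exp(At)x) ≤ e^((ε₁ − 2λ)t) · xᵀPx; in particular the quadratic form xᵀPx grows more negative at exponential rate at least ε₁ − 2λ inside the cone { x : xᵀPx ≤ 0 }. -/

import Mathlib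

open Matrix

/-- `M ⪯ N` iff `N - M` is positive semidefinite. -/
def matLE {m : Type*} [Fintype m] (M N : Matrix m m ℝ) : Prop := (N - M).PosSemidef

/-- A real symmetric matrix has inertia `p`: exactly `p` negative eigenvalues,
`card m − p` positive eigenvalues, and no zero eigenvalues, counted with multiplicity
(as roots of the characteristic polynomial). -/
def hasInertia {m : Type*} [Fintype m] [DecidableEq m]
    (P : Matrix m m ℝ) (p : ℕ) : Prop :=
  Multiset.countP (fun μ : ℝ => μ < 0) P.charpoly.roots = p ∧
  Multiset.countP (fun μ : ℝ => 0 < μ) P.charpoly.roots = Fintype.card m - p ∧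
  (0 : ℝ) ∉ P.charpoly.roots

/-- Number of complex eigenvalues (with algebraic multiplicity) of a real matrix
with strictly positive real part. -/
noncomputable def posReCount {m : Type*} [Fintype m] [DecidableEq m]
    (A : Matrix m m ℝ) : ℕ :=
  Multiset.countP (fun μ : ℂ => 0 < μ.re) (A.map Complex.ofReal).charpoly.roots

/-- Number of complex eigenvalues (with algebraic multiplicity) of a real matrix
with strictly negative real part. -/
noncomputable def negReCount {m : Type*} [Fintype m] [DecidableEq m]
    (A : Matrix m m ℝ) : ℕ :=
  Multiset.countP (fun μ : ℂ => μ.re < 0) (A.map Complex.ofReal).charpoly.roots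

/-- The quadratic form `xᵀ P x`. -/
def quadForm {m : Type*} [Fintype m] (P : Matrix m m ℝ) (x : m → ℝ) : ℝ :=
  x ⬝ᵥ P.mulVec x

/-- Euclidean norm on `m → ℝ`. -/
noncomputable def enorm {m : Type*} [Fintype m] (x : m → ℝ) : ℝ :=
  Real.sqrt (x ⬝ᵥ x)

/-- `J` is the Jacobian of `f`. -/
def IsJacobianOf {n : ℕ} (J : (Fin n → ℝ) → Matrix (Fin n) (Fin n) ℝ)
    (f : (Fin n → ℝ) → (Fin n → ℝ)) : Prop :=
  ∀ x, HasFDerivAt f (LinearMap.toContinuousLinearMap ((J x).mulVecLin)) x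

open Polynomial in
lemma myEvalCharpoly {m : Type*} [Fintype m] [DecidableEq m] (M : Matrix m m ℝ) (r : ℝ) :
    M.charpoly.eval r = (Matrix.scalar m r - M).det := by
  rw [Matrix.charpoly, _root_.eval_det, matPolyEquiv_charmatrix]
  simp

lemma memRootsOfMemSpectrum {m : Type*} [Fintype m] [DecidableEq m] (M : Matrix m m ℝ) (a : ℝ)
    (h : a ∈ spectrum ℝ M) : a ∈ M.charpoly.roots := by
  rw [Polynomial.mem_roots (M.charpoly_monic.ne_zero)]
  rw [spectrum.mem_iff] at h
  rw [Matrix.isUnit_iff_isUnit_det, isUnit_iff_ne_zero, not_ne_iff] at h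
  rw [Polynomial.IsRoot, myEvalCharpoly]
  rwa [show Matrix.scalar m a = (algebraMap ℝ (Matrix m m ℝ)) a from rfl]

open scoped Pointwise in
lemma quadForm_lowerBound {m : Type*} [Fintype m] [DecidableEq m] (P : Matrix m m ℝ) (μmin : ℝ)
    (hPsymm : P.IsSymm)
    (hμmin : IsLeast {μ : ℝ | μ ∈ P.charpoly.roots} μmin) :
    ∀ y : m → ℝ, μmin * (y ⬝ᵥ y) ≤ y ⬝ᵥ P.mulVec y := by
  have hP : P.IsHermitian := by
    rw [Matrix.IsHermitian, conjTranspose]; ext i j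
    simpa using congrFun (congrFun hPsymm i) j
  set Q : Matrix m m ℝ := P - μmin • 1 with hQdef
  have hQ : Q.IsHermitian := by
    rw [Matrix.IsHermitian, hQdef, conjTranspose_sub, hP.eq]
    have : (μmin • (1 : Matrix m m ℝ))ᴴ = μmin • (1 : Matrix m m ℝ) := by
      ext i j
      simp [conjTranspose_apply, Matrix.smul_apply, Matrix.one_apply]
      split <;> split <;> first | rfl | (exfalso; simp_all [eq_comm])
    rw [this]
  have hQps : Q.PosSemidef := by
    refine (Matrix.IsHermitian.posSemidef_iff_eigenvalues_nonneg hQ).mpr fun i => ?_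
    have hs : hQ.eigenvalues i ∈ spectrum ℝ Q := hQ.eigenvalues_mem_spectrum_real i
    have : spectrum ℝ Q = spectrum ℝ P - ({μmin} : Set ℝ) := by
      rw [spectrum.sub_singleton_eq]
      congr 1
      rw [hQdef, Algebra.algebraMap_eq_smul_one]
    rw [this] at hs
    obtain ⟨a, ha, b, hb, hab⟩ := hs
    rcases Set.mem_singleton_iff.mp hb
    have : μmin ≤ a := hμmin.2 (memRootsOfMemSpectrum P a ha)
    simp only at hab
    rw [← hab]
    exact sub_nonneg.mpr this
  intro y
  have h0 := hQps.dotProduct_mulVec_nonneg y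
  rw [star_trivial, hQdef, sub_mulVec, dotProduct_sub, smul_mulVec, one_mulVec,
    dotProduct_smul] at h0
  simp only [smul_eq_mul] at h0
  linarith

/-- exponential growth estimate of the quadratic form inside K⁻. -/
theorem exponential_estimate_in_Kminus {n : ℕ}
    (A P : Matrix (Fin n) (Fin n) ℝ) (p : ℕ) (lam eps μmin : ℝ)
    (hlam : 0 ≤ lam) (heps : 0 < eps) (hp1 : 1 ≤ p) (hpn : p ≤ n)
    (hPsymm : P.IsSymm) (hPinertia : hasInertia P p)
    (hμmin : IsLeast {μ : ℝ | μ ∈ P.charpoly.roots} μmin) (hμminneg : μmin < 0)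
    (hLMI : matLE (Aᵀ * P + P * A)
      (-((2 * lam) • P) - eps • (1 : Matrix (Fin n) (Fin n) ℝ))) :
    ∀ t : ℝ, 0 ≤ t → ∀ x : Fin n → ℝ, quadForm P x ≤ 0 →
      quadForm P ((NormedSpace.exp (t • A)).mulVec x)
        ≤ Real.exp ((eps / |μmin| - 2 * lam) * t) * quadForm P x := by
  intro t ht x _hx
  letI : NormedRing (Matrix (Fin n) (Fin n) ℝ) := Matrix.linftyOpNormedRing
  letI : NormedAlgebra ℝ (Matrix (Fin n) (Fin n) ℝ) := Matrix.linftyOpNormedAlgebra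
  set c : ℝ := eps / |μmin| - 2 * lam with hc
  set g : ℝ → (Fin n → ℝ) := fun s => (NormedSpace.exp (s • A)).mulVec x with hg
  -- derivative of the flow
  have hgderiv : ∀ s : ℝ, HasDerivAt g (A.mulVec (g s)) s := by
    intro s
    have h1 : HasDerivAt (fun u : ℝ => NormedSpace.exp (u • A))
        (A * NormedSpace.exp (s • A)) s := hasDerivAt_exp_smul_const' A s
    let L : Matrix (Fin n) (Fin n) ℝ →ₗ[ℝ] (Fin n → ℝ) :=
      { toFun := fun M => M.mulVec x,
        map_add' := fun M N => Matrix.add_mulVec M N x,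
        map_smul' := fun r M => smul_mulVec r M x }
    have h2 := (LinearMap.toContinuousLinearMap L).hasFDerivAt.comp_hasDerivAt s h1
    exact h2.congr_deriv (by
      show (A * NormedSpace.exp (s • A)) *ᵥ x = A *ᵥ ((NormedSpace.exp (s • A)) *ᵥ x)
      exact (Matrix.mulVec_mulVec _ _ _).symm)
  have hgi : ∀ (s : ℝ) (i : Fin n), HasDerivAt (fun u => g u i) (A.mulVec (g s) i) s := by
    intro s i
    exact (ContinuousLinearMap.proj (R := ℝ) (φ := fun _ : Fin n => ℝ) i).hasFDerivAt.comp_hasDerivAt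
      s (hgderiv s)
  set V : ℝ → ℝ := fun s => quadForm P (g s) with hV
  set D : ℝ → ℝ := fun s =>
    (A.mulVec (g s)) ⬝ᵥ (P.mulVec (g s)) + (g s) ⬝ᵥ (P.mulVec (A.mulVec (g s))) with hD
  have hVderiv : ∀ s : ℝ, HasDerivAt V (D s) s := by
    intro s
    have hsum : HasDerivAt (fun u => ∑ i, ∑ j, g u i * (P i j * g u j))
        (∑ i, ∑ j, ((A.mulVec (g s)) i * (P i j * g s j)
          + g s i * (P i j * (A.mulVec (g s)) j))) s := by
      refine HasDerivAt.fun_sum fun i _ => HasDerivAt.fun_sum fun j _ => ?_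
      exact (hgi s i).mul ((hgi s j).const_mul (P i j))
    have heq : V = fun u => ∑ i, ∑ j, g u i * (P i j * g u j) := by
      funext u
      simp [hV, quadForm, dotProduct, Matrix.mulVec, Finset.mul_sum]
    rw [heq]
    convert hsum using 1
    simp [hD, dotProduct, Matrix.mulVec, Finset.mul_sum, Finset.sum_add_distrib]
  -- the differential inequality
  have hDle : ∀ s : ℝ, D s ≤ c * V s := by
    intro s
    set y : Fin n → ℝ := g s with hy
    have h0 := PosSemidef.dotProduct_mulVec_nonneg hLMI y
    rw [star_trivial] at h0
    have hexp : y ⬝ᵥ ((-((2 * lam) • P) - eps • (1 : Matrix (Fin n) (Fin n) ℝ)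
        - (Aᵀ * P + P * A)).mulVec y)
        = -(2 * lam) * (y ⬝ᵥ P.mulVec y) - eps * (y ⬝ᵥ y)
          - ((A.mulVec y) ⬝ᵥ (P.mulVec y) + y ⬝ᵥ (P.mulVec (A.mulVec y))) := by
      have hAtP : y ⬝ᵥ ((Aᵀ * P).mulVec y) = (A.mulVec y) ⬝ᵥ (P.mulVec y) := by
        rw [← Matrix.mulVec_mulVec, Matrix.dotProduct_mulVec, Matrix.vecMul_transpose,
          Matrix.dotProduct_mulVec]
      have hPA : y ⬝ᵥ ((P * A).mulVec y) = y ⬝ᵥ (P.mulVec (A.mulVec y)) := by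
        rw [← Matrix.mulVec_mulVec]
      rw [sub_mulVec, sub_mulVec, add_mulVec, neg_mulVec, smul_mulVec, smul_mulVec,
        one_mulVec, dotProduct_sub, dotProduct_sub, dotProduct_add, dotProduct_neg,
        dotProduct_smul, dotProduct_smul, hAtP, hPA]
      simp only [smul_eq_mul]
      ring
    rw [hexp] at h0
    have hlow : μmin * (y ⬝ᵥ y) ≤ y ⬝ᵥ P.mulVec y := quadForm_lowerBound P μmin hPsymm hμmin y
    have hyy : (0:ℝ) ≤ y ⬝ᵥ y := by
      simp only [dotProduct]
      exact Finset.sum_nonneg fun i _ => mul_self_nonneg (y i)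
    have habs : |μmin| = -μmin := abs_of_neg hμminneg
    have hVs : V s = y ⬝ᵥ P.mulVec y := rfl
    have hDs : D s = (A.mulVec y) ⬝ᵥ (P.mulVec y) + y ⬝ᵥ (P.mulVec (A.mulVec y)) := rfl
    rw [hDs, hc, hVs]
    have hkey : -eps * (y ⬝ᵥ y) ≤ eps / |μmin| * (y ⬝ᵥ P.mulVec y) := by
      rw [habs, div_mul_eq_mul_div, le_div_iff₀ (by linarith)]
      nlinarith
    nlinarith
  -- Gronwall-type conclusion
  set W : ℝ → ℝ := fun s => Real.exp (-c * s) * V s with hW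
  have hWderiv : ∀ s : ℝ, HasDerivAt W (Real.exp (-c * s) * D s
      + (-c * Real.exp (-c * s)) * V s) s := by
    intro s
    have he : HasDerivAt (fun u : ℝ => Real.exp (-c * u)) (-c * Real.exp (-c * s)) s := by
      have := ((hasDerivAt_id s).const_mul (-c)).exp
      simpa [mul_comm] using this
    have := he.mul (hVderiv s)
    exact this.congr_deriv (by ring)
  have hWanti : Antitone W := by
    refine antitone_of_hasDerivAt_nonpos hWderiv fun s => ?_
    have h1 : D s ≤ c * V s := hDle s
    have h2 : (0:ℝ) < Real.exp (-c * s) := Real.exp_pos _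
    calc Real.exp (-c * s) * D s + (-c * Real.exp (-c * s)) * V s
        ≤ Real.exp (-c * s) * (c * V s) + (-c * Real.exp (-c * s)) * V s := by nlinarith
      _ = 0 := by ring
  have hW0 : W t ≤ W 0 := hWanti ht
  have hg0 : g 0 = x := by
    simp [hg]
  have hW0eq : W 0 = quadForm P x := by
    simp [hW, hV, hg0]
  rw [hW0eq] at hW0
  have hWt : W t = Real.exp (-c * t) * V t := rfl
  rw [hWt] at hW0
  have hVt : V t = quadForm P ((NormedSpace.exp (t • A)).mulVec x) := rfl
  rw [hVt] at hW0
  have hexppos : (0:ℝ) < Real.exp (-c * t) := Real.exp_pos _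
  have hfin := mul_le_mul_of_nonneg_left hW0 (Real.exp_pos (c * t)).le
  rw [← mul_assoc, ← Real.exp_add] at hfin
  have hzero : c * t + -c * t = 0 := by ring
  rw [hzero, Real.exp_zero, one_mul] at hfin
  exact hfin
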